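/- If κ is a regular uncountable cardinal and 𝒜 is a family of club subsets of κ such that no club C satisfies C ⊆* A for all A ∈ 𝒜 (i.e. 𝒜 is unbounded in (Cub_κ, ⊇*)), then the family of increasing enumerations {f_A : A ∈ 𝒜} is unbounded in (κ^κ, ≤*). -/

import Mathlib

open Cardinal Set

namespace PaperFormal

/-- `A` is unbounded in `κ` (as a set of ordinals below `κ`). -/
def UnboundedIn (κ : Ordinal.{0}) (A : Set Ordinal) : Prop :=
  ∀ α < κ, ∃ β ∈ A, α ≤ β

/-- `A ⊆* B`: almost inclusion (mod bounded) below `κ`. -/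
def AlmostSub (κ : Ordinal.{0}) (A B : Set Ordinal) : Prop :=
  ∃ α < κ, ∀ β ∈ A, α ≤ β → β ∈ B

/-- `C` is closed in `κ`. -/
def ClosedIn (κ : Ordinal.{0}) (C : Set Ordinal) : Prop :=
  ∀ α, α < κ → α ≠ 0 → (∀ β < α, (C ∩ Set.Ioo β α).Nonempty) → α ∈ C

/-- `C` is a club (closed unbounded set) in `κ`. -/
def IsClub (κ : Ordinal.{0}) (C : Set Ordinal) : Prop :=
  C ⊆ Set.Iio κ ∧ UnboundedIn κ C ∧ ClosedIn κ C

/-- `f` maps `κ` into `κ`. -/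
def FunOn (κ : Ordinal.{0}) (f : Ordinal → Ordinal) : Prop :=
  ∀ β < κ, f β < κ

/-- almost everywhere domination `f ≤* g` on `κ`. -/
def LeStar (κ : Ordinal.{0}) (f g : Ordinal → Ordinal) : Prop :=
  ∃ α < κ, ∀ β, α ≤ β → β < κ → f β ≤ g β

def UnboundedFunFam (κ : Ordinal.{0}) (𝒜 : Set (Ordinal → Ordinal)) : Prop :=
  (∀ f ∈ 𝒜, FunOn κ f) ∧ ∀ g, FunOn κ g → ∃ f ∈ 𝒜, ¬ LeStar κ f g

def DominatingFunFam (κ : Ordinal.{0}) (𝒜 : Set (Ordinal → Ordinal)) : Prop :=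
  (∀ f ∈ 𝒜, FunOn κ f) ∧ ∀ g, FunOn κ g → ∃ f ∈ 𝒜, LeStar κ g f

/-- the generalized bounding number `𝔟_κ`. -/
noncomputable def bNum (κ : Ordinal.{0}) : Cardinal :=
  sInf { μ : Cardinal.{0} | ∃ 𝒜, UnboundedFunFam κ 𝒜 ∧ #𝒜 = Cardinal.lift.{1} μ }

/-- the generalized dominating number `𝔡_κ`. -/
noncomputable def dNum (κ : Ordinal.{0}) : Cardinal :=
  sInf { μ : Cardinal.{0} | ∃ 𝒜, DominatingFunFam κ 𝒜 ∧ #𝒜 = Cardinal.lift.{1} μ }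

/-- a (proper) filter on `κ`. -/
structure IsKFilter (κ : Ordinal.{0}) (F : Set (Set Ordinal)) : Prop where
  subset : ∀ A ∈ F, A ⊆ Set.Iio κ
  univ_mem : Set.Iio κ ∈ F
  upward : ∀ A ∈ F, ∀ B, B ⊆ Set.Iio κ → A ⊆ B → B ∈ F
  inter : ∀ A ∈ F, ∀ B ∈ F, A ∩ B ∈ F
  proper : ∅ ∉ F

/-- an ultrafilter on `κ`. -/
structure IsKUltrafilter (κ : Ordinal.{0}) (U : Set (Set Ordinal)) extends IsKFilter κ U : Prop where
  decide : ∀ A, A ⊆ Set.Iio κ → A ∈ U ∨ (Set.Iio κ \ A) ∈ U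

/-- uniformity: every member is unbounded (equivalently, for regular `κ`, of size `κ`). -/
def Uniform (κ : Ordinal.{0}) (F : Set (Set Ordinal)) : Prop :=
  ∀ A ∈ F, UnboundedIn κ A

/-- `κ`-completeness. -/
def KComplete (κ : Ordinal.{0}) (F : Set (Set Ordinal)) : Prop :=
  ∀ s : Set (Set Ordinal), s ⊆ F → s.Nonempty → #s < Cardinal.lift.{1} κ.card → ⋂₀ s ∈ F

/-- closure under diagonal intersections. -/
def DiagClosed (κ : Ordinal.{0}) (F : Set (Set Ordinal)) : Prop :=
  ∀ A : Ordinal → Set Ordinal, (∀ i < κ, A i ∈ F) →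
    {β | β < κ ∧ ∀ i < β, β ∈ A i} ∈ F

/-- a normal ultrafilter on `κ`: `κ`-complete, contains all clubs, closed under
diagonal intersections. -/
def NormalUF (κ : Ordinal.{0}) (U : Set (Set Ordinal)) : Prop :=
  IsKUltrafilter κ U ∧ Uniform κ U ∧ KComplete κ U ∧
    (∀ C, IsClub κ C → C ∈ U) ∧ DiagClosed κ U

/-- `ℬ` is a `⊆*`-base for `F`. -/
def IsBase (κ : Ordinal.{0}) (F ℬ : Set (Set Ordinal)) : Prop :=
  ℬ ⊆ F ∧ ∀ A ∈ F, ∃ B ∈ ℬ, AlmostSub κ B A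

/-- the character of a filter. -/
noncomputable def chNum (κ : Ordinal.{0}) (F : Set (Set Ordinal)) : Cardinal :=
  sInf { μ : Cardinal.{0} | ∃ ℬ, IsBase κ F ℬ ∧ #ℬ = Cardinal.lift.{1} μ }

/-- there is a `⊆*`-decreasing `λ`-sequence in `F` with no `⊆*`-lower bound in `F`. -/
def HasTower (κ : Ordinal.{0}) (F : Set (Set Ordinal)) (lam : Cardinal) : Prop :=
  ∃ S : Ordinal → Set Ordinal, (∀ i < lam.ord, S i ∈ F) ∧
    (∀ i j, i < j → j < lam.ord → AlmostSub κ (S j) (S i)) ∧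
    ¬ ∃ Y ∈ F, ∀ i < lam.ord, AlmostSub κ Y (S i)

/-- the depth `𝔱(F)` of a filter. -/
noncomputable def tNum (κ : Ordinal.{0}) (F : Set (Set Ordinal)) : Cardinal :=
  sInf { μ : Cardinal.{0} | μ.IsRegular ∧ HasTower κ F μ }

/-- the ultrafilter number `𝔲_κ`. -/
noncomputable def uNum (κ : Ordinal.{0}) : Cardinal :=
  sInf { μ : Cardinal.{0} | ∃ U, IsKUltrafilter κ U ∧ Uniform κ U ∧ chNum κ U = μ }

/-- the complete ultrafilter number `𝔲^com_κ`. -/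
noncomputable def uComNum (κ : Ordinal.{0}) : Cardinal :=
  sInf { μ : Cardinal.{0} | ∃ U, IsKUltrafilter κ U ∧ Uniform κ U ∧ KComplete κ U ∧ chNum κ U = μ }

/-- `U` is a simple `P_λ`-point: a uniform ultrafilter with a `⊆*`-decreasing
generating sequence of length `λ`. -/
def SimplePPoint (κ : Ordinal.{0}) (lam : Cardinal) (U : Set (Set Ordinal)) : Prop :=
  IsKUltrafilter κ U ∧ Uniform κ U ∧
    ∃ S : Ordinal → Set Ordinal, (∀ i < lam.ord, S i ∈ U) ∧
      (∀ i j, i < j → j < lam.ord → AlmostSub κ (S j) (S i)) ∧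
      ∀ A ∈ U, ∃ i < lam.ord, AlmostSub κ (S i) A

/-- a `⊆*`-decreasing generating sequence of length `λ` for a filter `F`. -/
def SimplePFilter (κ : Ordinal.{0}) (lam : Cardinal) (F : Set (Set Ordinal)) : Prop :=
  ∃ S : Ordinal → Set Ordinal, (∀ i < lam.ord, S i ∈ F) ∧
    (∀ i j, i < j → j < lam.ord → AlmostSub κ (S j) (S i)) ∧
    ∀ A ∈ F, ∃ i < lam.ord, AlmostSub κ (S i) A

/-- `ℬ` is a `π`-base for `U`: unbounded sets, almost contained in members of `U`. -/
def IsPiBase (κ : Ordinal.{0}) (U ℬ : Set (Set Ordinal)) : Prop :=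
  (∀ B ∈ ℬ, B ⊆ Set.Iio κ ∧ UnboundedIn κ B) ∧ ∀ A ∈ U, ∃ B ∈ ℬ, AlmostSub κ B A

/-- the `π`-character `πch(U)`. -/
noncomputable def piChNum (κ : Ordinal.{0}) (U : Set (Set Ordinal)) : Cardinal :=
  sInf { μ : Cardinal.{0} | ∃ ℬ, IsPiBase κ U ℬ ∧ #ℬ = Cardinal.lift.{1} μ }

/-- `Y` is a pseudo-intersection of the family `𝒜`. -/
def IsPseudoInter (κ : Ordinal.{0}) (𝒜 : Set (Set Ordinal)) (Y : Set Ordinal) : Prop :=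
  Y ⊆ Set.Iio κ ∧ UnboundedIn κ Y ∧ ∀ A ∈ 𝒜, AlmostSub κ Y A

/-- `π𝔭(U)`: the least size of a subfamily of `U` with no pseudo-intersection. -/
noncomputable def piPNum (κ : Ordinal.{0}) (U : Set (Set Ordinal)) : Cardinal :=
  sInf { μ : Cardinal.{0} | ∃ 𝒜, 𝒜 ⊆ U ∧ #𝒜 = Cardinal.lift.{1} μ ∧ ¬ ∃ Y, IsPseudoInter κ 𝒜 Y }

/-- a `⊆*`-decreasing `λ`-sequence in `U` unbounded in `([κ]^κ, ⊇*)`. -/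
def HasPiTower (κ : Ordinal.{0}) (U : Set (Set Ordinal)) (lam : Cardinal) : Prop :=
  ∃ S : Ordinal → Set Ordinal, (∀ i < lam.ord, S i ∈ U) ∧
    (∀ i j, i < j → j < lam.ord → AlmostSub κ (S j) (S i)) ∧
    ¬ ∃ Y, Y ⊆ Set.Iio κ ∧ UnboundedIn κ Y ∧ ∀ i < lam.ord, AlmostSub κ Y (S i)

/-- `π𝔱(U)`. -/
noncomputable def piTNum (κ : Ordinal.{0}) (U : Set (Set Ordinal)) : Cardinal :=
  sInf { μ : Cardinal.{0} | μ.IsRegular ∧ HasPiTower κ U μ }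

/-- `A` splits `B`. -/
def Splits (κ : Ordinal.{0}) (A B : Set Ordinal) : Prop :=
  UnboundedIn κ (B ∩ A) ∧ UnboundedIn κ (B \ A)

/-- the splitting number `𝔰_κ`. -/
noncomputable def sNum (κ : Ordinal.{0}) : Cardinal :=
  sInf { μ : Cardinal.{0} | ∃ 𝒜 : Set (Set Ordinal), (∀ A ∈ 𝒜, A ⊆ Set.Iio κ) ∧
    (∀ X, X ⊆ Set.Iio κ → UnboundedIn κ X → ∃ A ∈ 𝒜, Splits κ A X) ∧ #𝒜 = Cardinal.lift.{1} μ }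

/-- the reaping number `𝔯_κ`. -/
noncomputable def rNum (κ : Ordinal.{0}) : Cardinal :=
  sInf { μ : Cardinal.{0} | ∃ 𝒜 : Set (Set Ordinal), (∀ A ∈ 𝒜, A ⊆ Set.Iio κ ∧ UnboundedIn κ A) ∧
    (¬ ∃ X, X ⊆ Set.Iio κ ∧ ∀ A ∈ 𝒜, Splits κ X A) ∧ #𝒜 = Cardinal.lift.{1} μ }

/-- `f` is almost one-to-one modulo `U`: bounded-to-one on a set in `U`. -/
def AlmostInjMod (κ : Ordinal.{0}) (U : Set (Set Ordinal)) (f : Ordinal → Ordinal) : Prop :=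
  ∃ X ∈ U, ∀ γ < κ, ∃ α < κ, ∀ β ∈ X, f β = γ → β < α

/-- the pushforward `f_*(U)`. -/
def PushFwd (κ : Ordinal.{0}) (f : Ordinal → Ordinal) (U : Set (Set Ordinal)) :
    Set (Set Ordinal) :=
  { A | A ⊆ Set.Iio κ ∧ (Set.Iio κ ∩ f ⁻¹' A) ∈ U }

/-- countable completeness. -/
def CountablyComplete (U : Set (Set Ordinal)) : Prop :=
  ∀ s : Set (Set Ordinal), s ⊆ U → s.Countable → s.Nonempty → ⋂₀ s ∈ U


/-- if `𝒜` is a family of clubs in regular uncountable `κ` with no club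
`⊆*`-below all of them, then the increasing enumerations of members of `𝒜`
(characterized as the strictly monotone maps of `Iio κ` onto the given club) form an
unbounded family in `(κ^κ, ≤*)`. -/
theorem stmt0 (κ : Cardinal.{0}) (hreg : κ.IsRegular) (hunc : Cardinal.aleph0 < κ)
    (𝒜 : Set (Set Ordinal)) (hclub : ∀ A ∈ 𝒜, IsClub κ.ord A)
    (hunb : ¬ ∃ C, IsClub κ.ord C ∧ ∀ A ∈ 𝒜, AlmostSub κ.ord C A)
    (e : Set Ordinal → Ordinal → Ordinal)
    (he : ∀ A ∈ 𝒜, StrictMonoOn (e A) (Set.Iio κ.ord) ∧ e A '' Set.Iio κ.ord = A) :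
    ∀ g, FunOn κ.ord g → ∃ A ∈ 𝒜, ¬ LeStar κ.ord (e A) g := by

  classical
  intro g hg
  by_contra hcon
  push_neg at hcon
  have hlim : Order.IsSuccLimit κ.ord := Cardinal.isSuccLimit_ord hreg.aleph0_le
  set h : Ordinal → Ordinal := fun x => (g x ⊔ x) + 1 with hh_def
  have hh : ∀ x < κ.ord, h x < κ.ord := by
    intro x hx
    have : g x ⊔ x < κ.ord := max_lt (hg x hx) hx
    simpa [hh_def] using hlim.succ_lt this
  set C : Set Ordinal := {α | α < κ.ord ∧ ∀ β < α, h β < α} with hC_def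
  -- C is closed under h, and consists of limit-like points
  apply hunb
  refine ⟨C, ⟨fun α hα => hα.1, ?_, ?_⟩, ?_⟩
  · -- unbounded
    intro α hα
    set F : ℕ → Ordinal := fun n =>
      Nat.rec (α + 1) (fun _ p => (Ordinal.bsup p (fun x _ => h x) ⊔ p) + 1) n with hF_def
    have hFlt : ∀ n, F n < κ.ord := by
      intro n
      induction n with
      | zero => simpa [hF_def] using hlim.succ_lt hα
      | succ n ih =>
        have hb : Ordinal.bsup (F n) (fun x _ => h x) < κ.ord := by
          refine Ordinal.bsup_lt_ord (c := κ.ord) ?_ ?_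
          · rw [hreg.cof_eq]
            exact (Cardinal.lt_ord.1 ih)
          · intro i hi
            exact hh i (hi.trans ih)
        have : Ordinal.bsup (F n) (fun x _ => h x) ⊔ F n < κ.ord := max_lt hb ih
        simpa [hF_def] using hlim.succ_lt this
    refine ⟨⨆ n, F n, ⟨?_, ?_⟩, ?_⟩
    · exact Cardinal.iSup_lt_ord_of_isRegular hreg (by simpa using hunc)
        (fun n => hFlt n)
    · intro β hβ
      obtain ⟨n, hn⟩ := Ordinal.lt_iSup_iff.1 hβ
      have h1 : h β ≤ Ordinal.bsup (F n) (fun x _ => h x) := Ordinal.le_bsup _ β hn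
      have h2 : h β < F (n + 1) := by
        calc h β ≤ Ordinal.bsup (F n) (fun x _ => h x) ⊔ F n := h1.trans (le_max_left _ _)
          _ < (Ordinal.bsup (F n) (fun x _ => h x) ⊔ F n) + 1 := by
              simpa using Order.lt_succ _
      exact h2.trans_le (Ordinal.le_iSup F (n + 1))
    · have : α < F 0 := by
        rw [show F 0 = α + 1 from rfl, Ordinal.add_one_eq_succ]
        exact Order.lt_succ α
      exact (this.trans_le (Ordinal.le_iSup F 0)).le
  · -- closed
    intro α hα hne hmem
    refine ⟨hα, ?_⟩
    intro β hβ
    obtain ⟨c, hcC, hcIoo⟩ := hmem β hβ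
    exact (hcC.2 β hcIoo.1).trans hcIoo.2
  · -- C ⊆* A for each A ∈ 𝒜
    intro A hA
    obtain ⟨α₀, hα₀, hle⟩ := hcon A hA
    have key : ∀ x, x < κ.ord → x ≤ e A x := by
      intro x
      induction x using Ordinal.induction with
      | h x ih =>
        intro hx
        by_contra hlt
        push_neg at hlt
        have h1 : e A x < κ.ord := hlt.trans hx
        have h2 : e A (e A x) < e A x := (he A hA).1 h1 hx hlt
        have h3 : e A x ≤ e A (e A x) := ih (e A x) hlt h1
        exact absurd h2 (not_lt.2 h3)
    refine ⟨α₀ + 1, by simpa using hlim.succ_lt hα₀, ?_⟩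
    intro δ hδC hα₀δ
    refine (hclub A hA).2.2 δ hδC.1 ?_ ?_
    · intro h0
      have : (0:Ordinal) < α₀ + 1 := by
        simpa using Order.bot_lt_succ α₀
      exact absurd (this.trans_le hα₀δ) (by simp [h0])
    · intro β hβ
      have hα₀lt : α₀ < δ := by
        have : α₀ < α₀ + 1 := by simpa using Order.lt_succ α₀
        exact this.trans_le hα₀δ
      set γ : Ordinal := (β ⊔ α₀) + 1 with hγ_def
      have hmaxlt : β ⊔ α₀ < δ := max_lt hβ hα₀lt
      have hγδ : γ < δ := by
        have h1 : h (β ⊔ α₀) < δ := hδC.2 _ hmaxlt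
        have h2 : γ ≤ h (β ⊔ α₀) := by
          have : β ⊔ α₀ ≤ g (β ⊔ α₀) ⊔ (β ⊔ α₀) := le_max_right _ _
          simpa [hγ_def, hh_def] using Order.succ_le_succ this
        exact h2.trans_lt h1
      have hγκ : γ < κ.ord := hγδ.trans hδC.1
      have heγA : e A γ ∈ A := by
        have := Set.mem_image_of_mem (e A) (show γ ∈ Set.Iio κ.ord from hγκ)
        rwa [(he A hA).2] at this
      have hβγ : β < γ := by
        have : β ≤ β ⊔ α₀ := le_max_left _ _
        have h2 : β ⊔ α₀ < γ := by
          simpa [hγ_def] using Order.lt_succ (β ⊔ α₀)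
        exact this.trans_lt h2
      have hβe : β < e A γ := hβγ.trans_le (key γ hγκ)
      have heγδ : e A γ < δ := by
        have h1 : e A γ ≤ g γ := hle γ (le_of_lt ((le_max_right β α₀).trans_lt
          (by simpa [hγ_def] using Order.lt_succ (β ⊔ α₀)))) hγκ
        have h2 : g γ < h γ := by
          have : g γ ≤ g γ ⊔ γ := le_max_left _ _
          exact this.trans_lt (by simpa [hh_def] using Order.lt_succ (g γ ⊔ γ))
        exact (h1.trans_lt h2).trans (hδC.2 γ hγδ)
      exact ⟨e A γ, heγA, hβe, heγδ⟩


end PaperFormal
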